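/- For the Berwald–Moór metric of momenta the T-tensor vanishes identically: T^{hijk} := K·C^{hij}|^k + a^h C^{ijk} + a^i C^{jkh} + a^j C^{khi} + a^k C^{hij} = 0 for all indices h, i, j, k, where C^{hij}|^k = ∂C^{hij}/∂p_k + ∑_r (C^{rij}C_r^{hk} + C^{hrj}C_r^{ik} + C^{hir}C_r^{jk}). -/

import Mathlib

open Finset

noncomputable section

/-- The Berwald–Moór coefficients: `a^{i₁…i_n} = 1/n!` if the indices are pairwise
distinct and `0` otherwise, with `n = N + 4`. -/
def BMc (N : ℕ) : (Fin (N + 4) → Fin (N + 4)) → ℝ :=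
  fun ι => if Function.Injective ι then ((N + 4).factorial : ℝ)⁻¹ else 0

/-- `A(p) = ∑ a^{i₁…i_n} p_{i₁}⋯p_{i_n}`. -/
def Afun (N : ℕ) (p : Fin (N + 4) → ℝ) : ℝ :=
  ∑ ι : Fin (N + 4) → Fin (N + 4), BMc N ι * ∏ t, p (ι t)

/-- `K(p) = A(p)^{1/n}`, the Berwald–Moór metric of momenta. -/
def Kfun (N : ℕ) (p : Fin (N + 4) → ℝ) : ℝ :=
  Afun N p ^ ((1 : ℝ) / (N + 4))

/-- `a^i = (∑ a^{i i₂…i_n} p_{i₂}⋯p_{i_n}) / K^{n-1}`. -/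
def aU1 (N : ℕ) (i : Fin (N + 4)) (p : Fin (N + 4) → ℝ) : ℝ :=
  (∑ ι : Fin (N + 3) → Fin (N + 4), BMc N (Fin.cons i ι) * ∏ t, p (ι t)) / Kfun N p ^ (N + 3)

/-- `a^{ij} = (∑ a^{i j i₃…i_n} p_{i₃}⋯p_{i_n}) / K^{n-2}`. -/
def aU2 (N : ℕ) (i j : Fin (N + 4)) (p : Fin (N + 4) → ℝ) : ℝ :=
  (∑ ι : Fin (N + 2) → Fin (N + 4), BMc N (Fin.cons i (Fin.cons j ι)) * ∏ t, p (ι t)) /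
    Kfun N p ^ (N + 2)

/-- `a^{ijk} = (∑ a^{i j k i₄…i_n} p_{i₄}⋯p_{i_n}) / K^{n-3}`. -/
def aU3 (N : ℕ) (i j k : Fin (N + 4)) (p : Fin (N + 4) → ℝ) : ℝ :=
  (∑ ι : Fin (N + 1) → Fin (N + 4), BMc N (Fin.cons i (Fin.cons j (Fin.cons k ι))) *
    ∏ t, p (ι t)) / Kfun N p ^ (N + 1)

/-- The matrix `a_{ij}`: `a_{ij} = n a_i a_j` for `i ≠ j` and `a_{ii} = -n(n-2) a_i²`,
where `a_i = p_i/K`. -/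
def aLowBM (N : ℕ) (p : Fin (N + 4) → ℝ) (i j : Fin (N + 4)) : ℝ :=
  if i = j then -((N + 4 : ℝ) * (N + 2)) * (p i / Kfun N p) ^ 2
  else (N + 4 : ℝ) * (p i / Kfun N p) * (p j / Kfun N p)

/-- `g_{ij} = (1/(n-1)) a_{ij} + ((n-2)/(n-1)) a_i a_j`. -/
def gLowBM (N : ℕ) (p : Fin (N + 4) → ℝ) (i j : Fin (N + 4)) : ℝ :=
  (1 / (N + 3 : ℝ)) * aLowBM N p i j +
    ((N + 2 : ℝ) / (N + 3)) * (p i / Kfun N p) * (p j / Kfun N p)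

/-- Partial derivative `∂f/∂p_k` of a function of `p`. -/
def pd {n : ℕ} (f : (Fin n → ℝ) → ℝ) (k : Fin n) (p : Fin n → ℝ) : ℝ :=
  deriv (fun t => f (Function.update p k t)) (p k)

/-- Fundamental metrical d-tensor `g^{ij} = (1/2) ∂²(K²)/∂p_i∂p_j`. -/
def gU (N : ℕ) (i j : Fin (N + 4)) (p : Fin (N + 4) → ℝ) : ℝ :=
  (1 / 2 : ℝ) * pd (fun q => pd (fun r => Kfun N r ^ 2) j q) i p

/-- Angular metrical d-tensor `h^{ij} = K ∂²K/∂p_i∂p_j`. -/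
def hU (N : ℕ) (i j : Fin (N + 4)) (p : Fin (N + 4) → ℝ) : ℝ :=
  Kfun N p * pd (fun q => pd (Kfun N) j q) i p

/-- v-torsion d-tensor `C^{ijk} = -(1/2) ∂g^{ij}/∂p_k`. -/
def CU (N : ℕ) (i j k : Fin (N + 4)) (p : Fin (N + 4) → ℝ) : ℝ :=
  -(1 / 2 : ℝ) * pd (gU N i j) k p

/-- v-derivation components `C_i^{jk} = ∑_s g_{is} C^{sjk}`. -/
def CL (N : ℕ) (p : Fin (N + 4) → ℝ) (i j k : Fin (N + 4)) : ℝ :=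
  ∑ s, gLowBM N p i s * CU N s j k p

theorem Afun_eq (N : ℕ) (p : Fin (N + 4) → ℝ) : Afun N p = ∏ i, p i := by
  classical
  have h1 : Afun N p = ∑ ι ∈ Finset.univ.filter (fun ι : Fin (N+4) → Fin (N+4) => Function.Injective ι),
      ((N + 4).factorial : ℝ)⁻¹ * ∏ t, p (ι t) := by
    rw [Finset.sum_filter]
    unfold Afun BMc
    exact Finset.sum_congr rfl (fun ι _ => by split <;> simp
      )
  rw [h1]
  have h2 : ∑ ι ∈ Finset.univ.filter (fun ι : Fin (N+4) → Fin (N+4) => Function.Injective ι),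
      ((N + 4).factorial : ℝ)⁻¹ * ∏ t, p (ι t)
      = ∑ σ : Equiv.Perm (Fin (N+4)), ((N + 4).factorial : ℝ)⁻¹ * ∏ t, p (σ t) := by
    refine (Finset.sum_bij (fun (σ : Equiv.Perm (Fin (N+4))) _ => (σ : Fin (N+4) → Fin (N+4))) ?_ ?_ ?_ ?_).symm
    · intro σ _; simp [Finset.mem_filter, σ.injective]
    · intro σ _ τ _ hst; exact Equiv.coe_fn_injective hst
    · intro ι hι
      have hinj : Function.Injective ι := (Finset.mem_filter.mp hι).2
      have hbij := Finite.injective_iff_bijective.mp hinj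
      exact ⟨Equiv.ofBijective ι hbij, Finset.mem_univ _, rfl⟩
    · intro σ _; rfl
  rw [h2]
  have h3 : ∀ σ : Equiv.Perm (Fin (N+4)), ∏ t, p (σ t) = ∏ i, p i := fun σ => Equiv.prod_comp σ p
  rw [Finset.sum_congr rfl (fun σ _ => by rw [h3 σ]), Finset.sum_const, Finset.card_univ,
    Fintype.card_perm, Fintype.card_fin, nsmul_eq_mul]
  rw [← mul_assoc, mul_inv_cancel₀ (by positivity), one_mul]

theorem aU1_num (N : ℕ) (i : Fin (N + 4)) (p : Fin (N + 4) → ℝ) :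
    (∑ ι : Fin (N + 3) → Fin (N + 4), BMc N (Fin.cons i ι) * ∏ t, p (ι t))
      = ((N + 4 : ℝ))⁻¹ * ∏ t : Fin (N + 3), p (i.succAbove t) := by
  classical
  have h1 : (∑ ι : Fin (N + 3) → Fin (N + 4), BMc N (Fin.cons i ι) * ∏ t, p (ι t))
      = ∑ ι ∈ Finset.univ.filter
          (fun ι : Fin (N+3) → Fin (N+4) => Function.Injective (Fin.cons i ι)),
        ((N + 4).factorial : ℝ)⁻¹ * ∏ t, p (ι t) := by
    rw [Finset.sum_filter]
    unfold BMc
    exact Finset.sum_congr rfl (fun ι _ => by split <;> simp)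
  rw [h1]
  have h2 : ∑ ι ∈ Finset.univ.filter
          (fun ι : Fin (N+3) → Fin (N+4) => Function.Injective (Fin.cons i ι)),
        ((N + 4).factorial : ℝ)⁻¹ * ∏ t, p (ι t)
      = ∑ σ : Equiv.Perm (Fin (N+3)),
        ((N + 4).factorial : ℝ)⁻¹ * ∏ t, p (i.succAbove (σ t)) := by
    refine (Finset.sum_bij
      (fun (σ : Equiv.Perm (Fin (N+3))) _ => (fun t => i.succAbove (σ t))) ?_ ?_ ?_ ?_).symm
    · intro σ _
      simp only [Finset.mem_filter, Finset.mem_univ, true_and]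
      refine Fin.cons_injective_iff.mpr ⟨?_, ?_⟩
      · rintro ⟨t, ht⟩; exact Fin.succAbove_ne i (σ t) ht
      · exact Fin.succAbove_right_injective.comp σ.injective
    · intro σ _ τ _ hst
      apply Equiv.ext; intro t
      have h := congrFun hst t
      exact Fin.succAbove_right_injective h
    · intro ι hι
      have hinj := Fin.cons_injective_iff.mp (Finset.mem_filter.mp hι).2
      have hne : ∀ t, i ≠ ι t := fun t ht => hinj.1 ⟨t, ht.symm⟩
      have hex : ∀ t, ∃ z, i.succAbove z = ι t := fun t =>
        Fin.exists_succAbove_eq (fun h => hne t h.symm)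
      choose g hg using hex
      have hginj : Function.Injective g := fun a b hab => by
        apply hinj.2; rw [← hg a, ← hg b, hab]
      refine ⟨Equiv.ofBijective g (Finite.injective_iff_bijective.mp hginj),
        Finset.mem_univ _, ?_⟩
      funext t; exact hg t
    · intro σ _; rfl
  rw [h2]
  have h3 : ∀ σ : Equiv.Perm (Fin (N+3)),
      ∏ t, p (i.succAbove (σ t)) = ∏ t, p (i.succAbove t) := fun σ =>
    Equiv.prod_comp σ (fun t => p (i.succAbove t))
  rw [Finset.sum_congr rfl (fun σ _ => by rw [h3 σ]), Finset.sum_const, Finset.card_univ,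
    Fintype.card_perm, Fintype.card_fin, nsmul_eq_mul]
  have hfac : ((N + 4).factorial : ℝ) = (N + 4 : ℝ) * ((N + 3).factorial : ℝ) := by
    rw [show N + 4 = (N + 3) + 1 from rfl, Nat.factorial_succ]
    push_cast; ring
  rw [hfac]
  have h4 : ((N+3).factorial : ℝ) ≠ 0 := by positivity
  have h5 : (N + 4 : ℝ) ≠ 0 := by positivity
  field_simp

abbrev nn (N : ℕ) : ℝ := (N : ℝ) + 4

def Wf (N : ℕ) (c a : ℝ) (m : Fin (N + 4) → ℕ) (q : Fin (N + 4) → ℝ) : ℝ :=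
  c * (∏ i, q i) ^ a / ∏ i, (q i) ^ (m i)

lemma update_pos {N : ℕ} {p : Fin (N + 4) → ℝ} (hp : ∀ i, 0 < p i) {k : Fin (N + 4)}
    {t : ℝ} (ht : 0 < t) : ∀ s, 0 < Function.update p k t s := by
  intro s
  rcases eq_or_ne s k with rfl | hs
  · simpa using ht
  · simpa [Function.update_of_ne hs] using hp s

lemma pd_congr {N : ℕ} (f g : (Fin (N + 4) → ℝ) → ℝ) (k : Fin (N + 4))
    {p : Fin (N + 4) → ℝ} (hp : ∀ i, 0 < p i)
    (h : ∀ q, (∀ s, 0 < q s) → f q = g q) : pd f k p = pd g k p := by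
  unfold pd
  apply Filter.EventuallyEq.deriv_eq
  exact Filter.eventuallyEq_of_mem (Ioi_mem_nhds (hp k))
    (fun t ht => h _ (update_pos hp ht))

lemma Wf_update {N : ℕ} (c a : ℝ) (m : Fin (N + 4) → ℕ) {p : Fin (N + 4) → ℝ}
    (hp : ∀ i, 0 < p i) (k : Fin (N + 4)) {t : ℝ} (ht : 0 < t) :
    Wf N c a m (Function.update p k t) =
      (c * (∏ i ∈ (univ \ {k}), p i) ^ a / ∏ i ∈ (univ \ {k}), (p i) ^ (m i)) *
        t ^ (a - (m k : ℝ)) := by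
  unfold Wf
  have h1 : ∏ i, Function.update p k t i = t * ∏ i ∈ (univ \ {k}), p i :=
    Finset.prod_update_of_mem (mem_univ k) p t
  have h2 : ∏ i, (Function.update p k t i) ^ (m i)
      = t ^ (m k) * ∏ i ∈ (univ \ {k}), (p i) ^ (m i) := by
    have : (fun i => (Function.update p k t i) ^ (m i))
        = Function.update (fun i => (p i) ^ (m i)) k (t ^ (m k)) := by
      funext s
      rcases eq_or_ne s k with rfl | hs
      · simp
      · simp [Function.update_of_ne hs]
    rw [show ∏ i, (Function.update p k t i) ^ (m i)
        = ∏ i, Function.update (fun i => (p i) ^ (m i)) k (t ^ (m k)) i from by rw [this]]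
    exact Finset.prod_update_of_mem (mem_univ k) _ _
  rw [h1, h2]
  have hE1 : (0:ℝ) ≤ ∏ i ∈ (univ \ {k}), p i :=
    le_of_lt (Finset.prod_pos (fun i _ => hp i))
  rw [Real.mul_rpow (le_of_lt ht) hE1]
  have h3 : t ^ (a - (m k : ℝ)) = t ^ a / t ^ (m k : ℝ) := Real.rpow_sub ht a _
  rw [h3, Real.rpow_natCast]
  ring

lemma pd_Wf {N : ℕ} (c a : ℝ) (m : Fin (N + 4) → ℕ) (k : Fin (N + 4))
    {p : Fin (N + 4) → ℝ} (hp : ∀ i, 0 < p i) :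
    pd (Wf N c a m) k p = (a - (m k : ℝ)) * Wf N c a m p / p k := by
  set C := c * (∏ i ∈ (univ \ {k}), p i) ^ a / ∏ i ∈ (univ \ {k}), (p i) ^ (m i) with hC
  have hev : (fun t => Wf N c a m (Function.update p k t))
      =ᶠ[nhds (p k)] (fun t => C * t ^ (a - (m k : ℝ))) :=
    Filter.eventuallyEq_of_mem (Ioi_mem_nhds (hp k)) (fun t ht => Wf_update c a m hp k ht)
  have hWp : Wf N c a m p = C * (p k) ^ (a - (m k : ℝ)) := by
    have := Wf_update c a m hp k (hp k)
    rwa [Function.update_eq_self] at this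
  unfold pd
  rw [hev.deriv_eq]
  have hd : HasDerivAt (fun t : ℝ => C * t ^ (a - (m k : ℝ)))
      (C * ((a - (m k : ℝ)) * (p k) ^ (a - (m k : ℝ) - 1))) (p k) :=
    (Real.hasDerivAt_rpow_const (Or.inl (ne_of_gt (hp k)))).const_mul C
  rw [hd.deriv, hWp]
  rw [Real.rpow_sub_one (ne_of_gt (hp k))]
  field_simp

-- ===== delta function and coefficients =====
def Dd {N : ℕ} (a b : Fin (N + 4)) : ℝ := if a = b then 1 else 0

def e1 {N : ℕ} (j : Fin (N + 4)) : Fin (N + 4) → ℕ := fun s => if s = j then 1 else 0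

def cdel {N : ℕ} (a b x : Fin (N + 4)) : ℝ :=
  Dd a b + Dd b x + Dd a x - (nn N) * Dd a b * Dd b x - 2 / nn N

-- ===== Wf algebra =====
lemma Wf_smul {N : ℕ} (b c a : ℝ) (m : Fin (N + 4) → ℕ) (q : Fin (N + 4) → ℝ) :
    b * Wf N c a m q = Wf N (b * c) a m q := by
  unfold Wf; ring

lemma Wf_div {N : ℕ} (c a : ℝ) (m : Fin (N + 4) → ℕ) (k : Fin (N + 4))
    (q : Fin (N + 4) → ℝ) :
    Wf N c a m q / q k = Wf N c a (fun s => m s + e1 k s) q := by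
  unfold Wf e1
  rw [div_div]
  congr 1
  rw [Finset.prod_congr rfl (fun i _ => pow_add (q i) (m i) _), Finset.prod_mul_distrib]
  congr 1
  rw [Finset.prod_congr rfl (fun i _ => by
    rw [show (q i) ^ (if i = k then 1 else 0) = if i = k then q i else 1 from by
      split <;> simp])]
  simpa using (Finset.prod_ite_eq' univ k q).symm

lemma Wf_congr {N : ℕ} {c c' a : ℝ} {m m' : Fin (N + 4) → ℕ} (q : Fin (N + 4) → ℝ)
    (hc : c = c') (hm : ∀ s, m s = m' s) : Wf N c a m q = Wf N c' a m' q := by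
  unfold Wf; rw [hc, funext hm]

-- ===== the chain =====
lemma prod_pos_of {N : ℕ} {q : Fin (N + 4) → ℝ} (hq : ∀ s, 0 < q s) : 0 < ∏ i, q i :=
  Finset.prod_pos (fun i _ => hq i)

lemma Kfun_val (N : ℕ) (q : Fin (N + 4) → ℝ) :
    Kfun N q = (∏ i, q i) ^ ((1 : ℝ) / nn N) := by
  unfold Kfun nn
  rw [Afun_eq]

lemma Kfun_pos {N : ℕ} {q : Fin (N + 4) → ℝ} (hq : ∀ s, 0 < q s) : 0 < Kfun N q := by
  rw [Kfun_val]; exact Real.rpow_pos_of_pos (prod_pos_of hq) _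

lemma Ksq_val {N : ℕ} {q : Fin (N + 4) → ℝ} (hq : ∀ s, 0 < q s) :
    Kfun N q ^ 2 = (∏ i, q i) ^ ((2 : ℝ) / nn N) := by
  rw [Kfun_val, ← Real.rpow_natCast ((∏ i, q i) ^ ((1:ℝ)/nn N)) 2,
    ← Real.rpow_mul (le_of_lt (prod_pos_of hq))]
  congr 1
  ring

lemma L0 {N : ℕ} (q : Fin (N + 4) → ℝ) (hq : ∀ s, 0 < q s) :
    Kfun N q ^ 2 = Wf N 1 (2 / nn N) (fun _ => 0) q := by
  rw [Ksq_val hq]; unfold Wf; simp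

lemma L1 {N : ℕ} (j : Fin (N + 4)) (q : Fin (N + 4) → ℝ) (hq : ∀ s, 0 < q s) :
    pd (fun r => Kfun N r ^ 2) j q = Wf N (2 / nn N) (2 / nn N) (e1 j) q := by
  rw [pd_congr _ (Wf N 1 (2 / nn N) (fun _ => 0)) j hq (fun q hq => L0 q hq),
    pd_Wf _ _ _ _ hq]
  rw [Wf_smul, Wf_div]
  exact Wf_congr q (by push_cast; ring) (fun s => by simp [e1])

def cg (N : ℕ) (i j : Fin (N + 4)) : ℝ := (2 / nn N - Dd i j) / nn N

lemma L2 {N : ℕ} (i j : Fin (N + 4)) (q : Fin (N + 4) → ℝ) (hq : ∀ s, 0 < q s) :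
    gU N i j q = Wf N (cg N i j) (2 / nn N) (fun s => e1 j s + e1 i s) q := by
  unfold gU
  rw [pd_congr _ (Wf N (2 / nn N) (2 / nn N) (e1 j)) i hq (fun q hq => L1 j q hq),
    pd_Wf _ _ _ _ hq]
  rw [mul_div_assoc, Wf_div, Wf_smul, Wf_smul]
  refine Wf_congr q ?_ (fun s => rfl)
  simp only [cg, Dd, e1, apply_ite (Nat.cast : ℕ → ℝ), Nat.cast_one, Nat.cast_zero, eq_comm]
  ring

def ccc (N : ℕ) (i j k : Fin (N + 4)) : ℝ :=
  -(1 / 2 : ℝ) * cg N i j * (2 / nn N - Dd k i - Dd k j)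

lemma L3 {N : ℕ} (i j k : Fin (N + 4)) (q : Fin (N + 4) → ℝ) (hq : ∀ s, 0 < q s) :
    CU N i j k q = Wf N (ccc N i j k) (2 / nn N)
      (fun s => e1 j s + e1 i s + e1 k s) q := by
  unfold CU
  rw [pd_congr _ (Wf N (cg N i j) (2 / nn N) (fun s => e1 j s + e1 i s)) k hq
    (fun q hq => L2 i j q hq), pd_Wf _ _ _ _ hq]
  rw [mul_div_assoc, Wf_div, Wf_smul, Wf_smul]
  refine Wf_congr q ?_ (fun s => rfl)
  simp only [ccc, e1, Dd, Nat.cast_add, apply_ite (Nat.cast : ℕ → ℝ), Nat.cast_one,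
    Nat.cast_zero]
  ring

example : True := trivial

-- ===== value lemmas =====
lemma nn_pos (N : ℕ) : 0 < nn N := by unfold nn; positivity
lemma nn_ne (N : ℕ) : nn N ≠ 0 := ne_of_gt (nn_pos N)

lemma prod_e1 {N : ℕ} (a : Fin (N + 4)) (q : Fin (N + 4) → ℝ) :
    ∏ s, q s ^ (e1 a s) = q a := by
  unfold e1
  rw [Finset.prod_congr rfl (fun s _ => by
    rw [show (q s) ^ (if s = a then 1 else 0) = if s = a then q s else 1 from by
      split <;> simp])]
  simpa using Finset.prod_ite_eq' univ a q

lemma Wf3_val {N : ℕ} (c : ℝ) (a b x : Fin (N + 4)) {q : Fin (N + 4) → ℝ}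
    (hq : ∀ s, 0 < q s) :
    Wf N c (2 / nn N) (fun s => e1 b s + e1 a s + e1 x s) q
      = c * Kfun N q ^ 2 / (q a * q b * q x) := by
  unfold Wf
  rw [Ksq_val hq]
  congr 1
  rw [Finset.prod_congr rfl (fun s _ => pow_add (q s) _ (e1 x s)),
    Finset.prod_mul_distrib,
    Finset.prod_congr rfl (fun s _ => pow_add (q s) (e1 b s) (e1 a s)),
    Finset.prod_mul_distrib, prod_e1, prod_e1, prod_e1]
  ring

lemma Dd_symm {N : ℕ} (a b : Fin (N + 4)) : Dd a b = Dd b a := by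
  unfold Dd
  rcases eq_or_ne a b with rfl | hab
  · rfl
  · rw [if_neg hab, if_neg (Ne.symm hab)]

lemma ccc_cdel {N : ℕ} (i j k : Fin (N + 4)) :
    ccc N i j k = cdel i j k / (nn N) ^ 2 := by
  have hn := nn_ne N
  unfold ccc cg cdel Dd
  rcases eq_or_ne i j with rfl | h1
  · rcases eq_or_ne k i with rfl | h2
    · simp only [if_pos rfl]
      field_simp
      first | ring1 | (ring_nf; simp) | simp
    · simp only [if_pos rfl, if_neg h2, if_neg (Ne.symm h2)]
      field_simp
      first | ring1 | (ring_nf; simp) | simp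
  · rcases eq_or_ne k i with rfl | h2
    · simp only [if_pos rfl, if_neg h1, if_neg (Ne.symm h1)]
      field_simp
      first | ring1 | (ring_nf; simp) | simp
    · rcases eq_or_ne k j with rfl | h3
      · simp only [if_pos rfl, if_neg h1, if_neg (Ne.symm h1), if_neg h2,
          if_neg (Ne.symm h2)]
        field_simp
        first | ring1 | (ring_nf; simp) | simp
      · simp only [if_neg h1, if_neg (Ne.symm h1), if_neg h2, if_neg (Ne.symm h2),
          if_neg h3, if_neg (Ne.symm h3)]
        field_simp
        first | ring1 | (ring_nf; simp) | simp
lemma CU_val {N : ℕ} (i j k : Fin (N + 4)) {q : Fin (N + 4) → ℝ} (hq : ∀ s, 0 < q s) :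
    CU N i j k q = cdel i j k * Kfun N q ^ 2 / ((nn N) ^ 2 * (q i * q j * q k)) := by
  rw [L3 i j k q hq, Wf3_val _ i j k hq, ccc_cdel]
  have hn := nn_ne N
  field_simp

lemma pdCU_val {N : ℕ} (h i j k : Fin (N + 4)) {p : Fin (N + 4) → ℝ}
    (hp : ∀ s, 0 < p s) :
    pd (CU N h i j) k p = (2 / nn N - Dd h k - Dd i k - Dd j k) * cdel h i j *
      Kfun N p ^ 2 / ((nn N) ^ 2 * (p h * p i * p j * p k)) := by
  rw [pd_congr _ (Wf N (ccc N h i j) (2 / nn N) (fun s => e1 i s + e1 h s + e1 j s)) k hp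
    (fun q hq => L3 h i j q hq), pd_Wf _ _ _ _ hp, Wf3_val _ h i j hp, ccc_cdel]
  have hn := nn_ne N
  have hcast : ((fun s => e1 i s + e1 h s + e1 j s) k : ℝ)
      = Dd h k + Dd i k + Dd j k := by
    simp only [e1, Dd, Nat.cast_add, apply_ite (Nat.cast : ℕ → ℝ), Nat.cast_one,
      Nat.cast_zero, eq_comm]
    ring
  rw [hcast]
  have h1 := (hp h).ne'
  have h2 := (hp i).ne'
  have h3 := (hp j).ne'
  have h4 := (hp k).ne'
  field_simp
  ring

-- ===== delta sums =====
lemma sum_D {N : ℕ} (a : Fin (N + 4)) : ∑ r, Dd r a = 1 := by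
  unfold Dd
  simp [Finset.sum_ite_eq']

lemma sum_DD {N : ℕ} (a b : Fin (N + 4)) : ∑ r, Dd r a * Dd r b = Dd a b := by
  have h : ∀ r : Fin (N + 4), Dd r a * Dd r b = if r = a then Dd a b else 0 := by
    intro r
    unfold Dd
    rcases eq_or_ne r a with rfl | h1
    · rcases eq_or_ne r b with rfl | h2
      · simp
      · simp [h2]
    · simp [h1]
  rw [Finset.sum_congr rfl (fun r _ => h r)]
  simp [Finset.sum_ite_eq']

lemma sum_const_real {N : ℕ} (x : ℝ) : ∑ _r : Fin (N + 4), x = nn N * x := by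
  rw [Finset.sum_const, Finset.card_univ, Fintype.card_fin, nsmul_eq_mul]
  unfold nn
  push_cast
  ring

lemma cdel_lin {N : ℕ} (r a b : Fin (N + 4)) :
    cdel r a b = (1 - nn N * Dd a b) * Dd r a + Dd r b + (Dd a b - 2 / nn N) := by
  unfold cdel; ring

lemma sum_cdel0 {N : ℕ} (h k : Fin (N + 4)) : ∑ s, cdel s h k = 0 := by
  rw [Finset.sum_congr rfl (fun s _ => cdel_lin s h k), Finset.sum_add_distrib,
    Finset.sum_add_distrib, ← Finset.mul_sum, sum_D, sum_D, sum_const_real]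
  have h4 : (4 + (N:ℝ)) ≠ 0 := by positivity
  have h4' : ((N:ℝ) + 4) ≠ 0 := by positivity
  unfold nn
  field_simp
  ring

lemma sum_Dcdel {N : ℕ} (r h k : Fin (N + 4)) :
    ∑ s, Dd r s * cdel s h k = cdel r h k := by
  have hpt : ∀ s : Fin (N + 4), Dd r s * cdel s h k = if s = r then cdel r h k else 0 := by
    intro s
    unfold Dd
    rcases eq_or_ne s r with rfl | h1
    · simp
    · simp [h1, if_neg (Ne.symm h1)]
  rw [Finset.sum_congr rfl (fun s _ => hpt s)]
  simp [Finset.sum_ite_eq']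

lemma sum_gc {N : ℕ} (r h k : Fin (N + 4)) :
    ∑ s, (2 - nn N * Dd r s) * cdel s h k = -(nn N) * cdel r h k := by
  have hpt : ∀ s : Fin (N + 4), (2 - nn N * Dd r s) * cdel s h k
      = 2 * cdel s h k - nn N * (Dd r s * cdel s h k) := fun s => by ring
  rw [Finset.sum_congr rfl (fun s _ => hpt s), Finset.sum_sub_distrib,
    ← Finset.mul_sum, ← Finset.mul_sum, sum_cdel0, sum_Dcdel]
  ring

lemma sum_cdel2 {N : ℕ} (a b x y : Fin (N + 4)) :
    ∑ r, cdel r a b * cdel r x y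
      = (1 - nn N * Dd a b) * (1 - nn N * Dd x y) * Dd a x
        + (1 - nn N * Dd a b) * Dd a y + (1 - nn N * Dd a b) * (Dd x y - 2 / nn N)
        + (1 - nn N * Dd x y) * Dd b x + Dd b y + (Dd x y - 2 / nn N)
        + (Dd a b - 2 / nn N) * (1 - nn N * Dd x y) + (Dd a b - 2 / nn N)
        + nn N * ((Dd a b - 2 / nn N) * (Dd x y - 2 / nn N)) := by
  set u1 := 1 - nn N * Dd a b with hu1
  set w1 := Dd a b - 2 / nn N with hw1
  set u2 := 1 - nn N * Dd x y with hu2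
  set w2 := Dd x y - 2 / nn N with hw2
  have hpt : ∀ r : Fin (N + 4), cdel r a b * cdel r x y
      = u1 * u2 * (Dd r a * Dd r x) + u1 * (Dd r a * Dd r y) + (u1 * w2) * Dd r a
        + u2 * (Dd r b * Dd r x) + (Dd r b * Dd r y) + w2 * Dd r b
        + (w1 * u2) * Dd r x + w1 * Dd r y + w1 * w2 := by
    intro r
    rw [cdel_lin r a b, cdel_lin r x y, ← hu1, ← hw1, ← hu2, ← hw2]
    ring
  rw [Finset.sum_congr rfl (fun r _ => hpt r)]
  simp only [Finset.sum_add_distrib, ← Finset.mul_sum, sum_DD, sum_D, sum_const_real]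
  ring

-- ===== gLow / CL =====
lemma gLow_val {N : ℕ} (r s : Fin (N + 4)) {p : Fin (N + 4) → ℝ} (hp : ∀ i, 0 < p i) :
    gLowBM N p r s = (2 - nn N * Dd r s) * p r * p s / Kfun N p ^ 2 := by
  have hK := (Kfun_pos hp).ne'
  have h3 : ((N : ℝ) + 3) ≠ 0 := by positivity
  unfold gLowBM aLowBM Dd nn
  rcases eq_or_ne r s with rfl | h1
  · rw [if_pos rfl, if_pos rfl]
    push_cast
    field_simp
    ring
  · rw [if_neg h1, if_neg h1]
    push_cast
    field_simp
    ring

lemma CL_val {N : ℕ} (r h k : Fin (N + 4)) {p : Fin (N + 4) → ℝ} (hp : ∀ i, 0 < p i) :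
    CL N p r h k = -(p r) * cdel r h k / (nn N * (p h * p k)) := by
  have hK := (Kfun_pos hp).ne'
  have hn := nn_ne N
  unfold CL
  have hpt : ∀ s : Fin (N + 4), gLowBM N p r s * CU N s h k p
      = ((2 - nn N * Dd r s) * cdel s h k) * (p r / (nn N ^ 2 * (p h * p k))) := by
    intro s
    rw [gLow_val r s hp, CU_val s h k hp]
    have h1 := (hp s).ne'
    have h2 := (hp h).ne'
    have h3 := (hp k).ne'
    have h4 := (hp r).ne'
    field_simp
  rw [Finset.sum_congr rfl (fun s _ => hpt s), ← Finset.sum_mul, sum_gc]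
  have h2 := (hp h).ne'
  have h3 := (hp k).ne'
  field_simp

-- ===== aU1 value =====
lemma aU1_val {N : ℕ} (i : Fin (N + 4)) {p : Fin (N + 4) → ℝ} (hp : ∀ s, 0 < p s) :
    aU1 N i p = Kfun N p / (nn N * p i) := by
  have hP : 0 < ∏ s, p s := prod_pos_of hp
  have hn := nn_ne N
  have hpi := (hp i).ne'
  unfold aU1
  rw [aU1_num]
  have e1 : Kfun N p ^ (N + 3) = (∏ s, p s) ^ (((N : ℝ) + 3) / nn N) := by
    rw [Kfun_val, ← Real.rpow_natCast ((∏ s, p s) ^ ((1:ℝ)/nn N)) (N + 3),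
      ← Real.rpow_mul hP.le]
    congr 1
    push_cast
    field_simp
  have hprodT : ∏ t : Fin (N + 3), p (i.succAbove t) = (∏ s, p s) / p i := by
    rw [Fin.prod_univ_succAbove p i]
    field_simp
  have e2 : (∏ s, p s) ^ ((1:ℝ) / nn N) * (∏ s, p s) ^ (((N : ℝ) + 3) / nn N)
      = ∏ s, p s := by
    rw [← Real.rpow_add hP]
    rw [show (1:ℝ) / nn N + ((N : ℝ) + 3) / nn N = 1 by unfold nn; field_simp; ring]
    exact Real.rpow_one _
  rw [e1, hprodT, Kfun_val,
    div_eq_div_iff (by positivity) (by positivity), e2]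
  unfold nn
  field_simp
  try ring1

-- ===== cdel symmetries =====
lemma cdel_swap {N : ℕ} (a b x : Fin (N + 4)) : cdel a b x = cdel b a x := by
  unfold cdel Dd
  split_ifs <;> first | ring1 | (subst_vars; first | ring1 | simp_all)

lemma cdel_rot {N : ℕ} (a b x : Fin (N + 4)) : cdel a b x = cdel x a b := by
  unfold cdel Dd
  split_ifs <;> first | ring1 | (subst_vars; first | ring1 | simp_all)

-- ===== the final combinatorial identity =====
set_option maxHeartbeats 3000000 in
lemma FinalId (N : ℕ) (h i j k : Fin (N + 4)) :
    ∑ r, (cdel r i j * cdel r h k + cdel r h j * cdel r i k + cdel r h i * cdel r j k)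
      = nn N * (2 / nn N - Dd h k - Dd i k - Dd j k) * cdel h i j
        + (cdel i j k + cdel h j k + cdel h i k + cdel h i j) := by
  have hn := nn_ne N
  rw [Finset.sum_add_distrib, Finset.sum_add_distrib, sum_cdel2 i j h k,
    sum_cdel2 h j i k, sum_cdel2 h i j k]
  unfold cdel
  rw [Dd_symm i h, Dd_symm j h, Dd_symm j i]
  unfold Dd
  field_simp
  split_ifs <;> first | ring1 | (subst_vars; first | ring1 | simp_all)

-- ===== final assembly =====
/-- for the Berwald–Moór metric of momenta (`n = N + 4`) the T-tensor
`T^{hijk} = K C^{hij}|^k + a^h C^{ijk} + a^i C^{jkh} + a^j C^{khi} + a^k C^{hij}`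
vanishes identically. -/
theorem stmt_19 (N : ℕ) (p : Fin (N + 4) → ℝ) (hp : ∀ i, 0 < p i) :
    ∀ h i j k,
      Kfun N p * (pd (CU N h i j) k p +
          ∑ r, (CU N r i j p * CL N p r h k + CU N h r j p * CL N p r i k +
            CU N h i r p * CL N p r j k)) +
        aU1 N h p * CU N i j k p + aU1 N i p * CU N j k h p +
        aU1 N j p * CU N k h i p + aU1 N k p * CU N h i j p = 0 := by
  intro h i j k
  have hn := nn_ne N
  have hph := (hp h).ne'
  have hpi := (hp i).ne'
  have hpj := (hp j).ne'
  have hpk := (hp k).ne'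
  have hK := (Kfun_pos hp).ne'
  have hsum : (∑ r, (CU N r i j p * CL N p r h k + CU N h r j p * CL N p r i k +
      CU N h i r p * CL N p r j k))
      = (-(Kfun N p ^ 2) / (nn N ^ 3 * (p h * p i * p j * p k))) *
        ∑ r, (cdel r i j * cdel r h k + cdel r h j * cdel r i k +
          cdel r h i * cdel r j k) := by
    rw [Finset.mul_sum]
    refine Finset.sum_congr rfl (fun r _ => ?_)
    have hpr := (hp r).ne'
    rw [CU_val r i j hp, CU_val h r j hp, CU_val h i r hp,
      CL_val r h k hp, CL_val r i k hp, CL_val r j k hp,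
      show @cdel N h r j = cdel r h j from cdel_swap h r j,
      show @cdel N h i r = cdel r h i from cdel_rot h i r]
    field_simp
    ring
  rw [hsum, FinalId N h i j k, pdCU_val h i j k hp,
    aU1_val h hp, aU1_val i hp, aU1_val j hp, aU1_val k hp,
    CU_val i j k hp, CU_val j k h hp, CU_val k h i hp, CU_val h i j hp,
    show @cdel N j k h = cdel h j k from cdel_rot j k h,
    show @cdel N k h i = cdel h i k from (cdel_rot k h i).trans (cdel_rot i k h)]
  field_simp
  ring
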